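/- Fix p̂ ∈ Δ(V) with p̂_1 ≥ … ≥ p̂_d > 0 and ε with p̂_d ≤ ε < p̂_1. Let î = max{i : p̂_i > ε}, ŵ_i = ε / log(p̂_i/(p̂_i − ε)) for i ≤ î, and Î = max{I ≤ î : Σ_{i=1}^{I−1} ŵ_i log(p̂_i/p̂_I) ≤ ε}. Then the value of the one-step Decoding Game has the closed form: sup over q ∈ Δ(V) of inf over p ∈ N(p̂) of Σ_i q_i log p_i equals (Σ_{k=1}^{Î} ŵ_k log p̂_k − ε) / (Σ_{k=1}^{Î} ŵ_k), where infima and suprema are taken in the extended reals with the convention log 0 = −∞. -/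

import Mathlib

open Finset

lemma chord_log {a δ ε : ℝ} (hδ0 : 0 ≤ δ) (hδε : δ ≤ ε) (hε0 : 0 < ε) (hεa : ε < a) :
    Real.log a - δ / ε * Real.log (a / (a - ε)) ≤ Real.log (a - δ) := by
  have ha : 0 < a := lt_trans hε0 hεa
  have haε : 0 < a - ε := by linarith
  have hle : δ / ε ≤ 1 := (div_le_one hε0).2 hδε
  have h := (strictConcaveOn_log_Ioi.concaveOn).2 (Set.mem_Ioi.2 ha) (Set.mem_Ioi.2 haε)
      (show (0:ℝ) ≤ 1 - δ/ε by linarith) (show (0:ℝ) ≤ δ/ε by positivity)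
      (show 1 - δ/ε + δ/ε = 1 by ring)
  have harg : (1 - δ/ε) • a + (δ/ε) • (a - ε) = a - δ := by
    simp only [smul_eq_mul]; field_simp; ring
  rw [harg] at h
  simp only [smul_eq_mul] at h
  rw [Real.log_div (ne_of_gt ha) (ne_of_gt haε)]
  have : Real.log a - δ/ε * (Real.log a - Real.log (a - ε))
      = (1 - δ/ε) * Real.log a + (δ/ε) * Real.log (a - ε) := by ring
  rw [this]; exact h

lemma ecoe_sum {α : Type*} (s : Finset α) (f : α → ℝ) :
    ((∑ i ∈ s, f i : ℝ) : EReal) = ∑ i ∈ s, ((f i : ℝ) : EReal) := by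
  induction s using Finset.cons_induction with
  | empty => simp
  | cons a s ha ih => rw [Finset.sum_cons, Finset.sum_cons, EReal.coe_add, ih]

noncomputable def elog (x : ℝ) : EReal := if x ≤ 0 then ⊥ else ((Real.log x : ℝ) : EReal)

def simplex (d : ℕ) : Set (Fin d → ℝ) := {p | (∀ i, 0 ≤ p i) ∧ ∑ i, p i = 1}

noncomputable def dTV {d : ℕ} (p q : Fin d → ℝ) : ℝ := (∑ i, |p i - q i|) / 2

def nbhd {d : ℕ} (phat : Fin d → ℝ) (ε : ℝ) : Set (Fin d → ℝ) :=
  {p | p ∈ simplex d ∧ dTV p phat ≤ ε}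

noncomputable def obj {d : ℕ} (q p : Fin d → ℝ) : EReal :=
  ∑ i, ((q i : ℝ) : EReal) * elog (p i)

/-- `ŵ_i = ε / log(p̂_i/(p̂_i − ε))`. -/
noncomputable def what {d : ℕ} (phat : Fin d → ℝ) (ε : ℝ) (i : Fin d) : ℝ :=
  ε / Real.log (phat i / (phat i - ε))

lemma obj_pos_eq {d : ℕ} (q p : Fin d → ℝ) (hp : ∀ i, 0 < p i) :
    obj q p = ((∑ i, q i * Real.log (p i) : ℝ) : EReal) := by
  rw [obj, ecoe_sum]
  refine Finset.sum_congr rfl fun i _ => ?_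
  rw [elog, if_neg (not_le.2 (hp i)), ← EReal.coe_mul]

lemma sum_pospart_le {d : ℕ} (p phat : Fin d → ℝ) (hp : ∑ i, p i = 1)
    (hph : ∑ i, phat i = 1) {ε : ℝ} (h : dTV p phat ≤ ε) :
    ∑ i, max (phat i - p i) 0 ≤ ε := by
  have key : ∀ i, max (phat i - p i) 0 = ((phat i - p i) + |p i - phat i|) / 2 := by
    intro i
    rw [abs_sub_comm]
    rcases le_total (phat i - p i) 0 with h' | h'
    · rw [max_eq_right h', abs_of_nonpos h']; ring
    · rw [max_eq_left h', abs_of_nonneg h']; ring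
  calc ∑ i, max (phat i - p i) 0
      = ((∑ i, phat i - ∑ i, p i) + ∑ i, |p i - phat i|) / 2 := by
        simp_rw [key]
        rw [← Finset.sum_div, Finset.sum_add_distrib, Finset.sum_sub_distrib]
    _ = (∑ i, |p i - phat i|) / 2 := by rw [hp, hph]; ring_nf
    _ ≤ ε := h

def pmove {d : ℕ} (phat : Fin d → ℝ) (a b : Fin d) (δ : ℝ) : Fin d → ℝ :=
  fun k => phat k + (if k = b then δ else 0) - (if k = a then δ else 0)

lemma pmove_simplex {d : ℕ} (phat : Fin d → ℝ) {a b : Fin d} (hab : a ≠ b) {δ : ℝ}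
    (hδ0 : 0 ≤ δ) (hδa : δ ≤ phat a) (hph : phat ∈ simplex d) :
    pmove phat a b δ ∈ simplex d := by
  obtain ⟨h0, h1⟩ := hph
  constructor
  · intro k
    unfold pmove
    by_cases hk : k = a
    · subst hk
      rw [if_neg hab, if_pos rfl]
      linarith
    · rw [if_neg hk]
      by_cases hk' : k = b
      · rw [if_pos hk']; linarith [h0 k]
      · rw [if_neg hk']; linarith [h0 k]
  · unfold pmove
    rw [Finset.sum_sub_distrib, Finset.sum_add_distrib,
      Finset.sum_ite_eq' univ b (fun _ => δ), Finset.sum_ite_eq' univ a (fun _ => δ)]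
    simp [h1]

lemma pmove_dTV {d : ℕ} (phat : Fin d → ℝ) {a b : Fin d} (hab : a ≠ b) {δ : ℝ}
    (hδ0 : 0 ≤ δ) : dTV (pmove phat a b δ) phat = δ := by
  unfold dTV pmove
  have key : ∀ k : Fin d,
      |phat k + (if k = b then δ else 0) - (if k = a then δ else 0) - phat k|
        = (if k = b then δ else 0) + (if k = a then δ else 0) := by
    intro k
    by_cases hk : k = a <;> by_cases hk' : k = b
    · exact absurd (hk ▸ hk') hab
    · subst hk
      simp only [if_neg hab, if_pos rfl, if_true]
      rw [show phat k + 0 - δ - phat k = -δ by ring, abs_neg, abs_of_nonneg hδ0]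
      ring
    · subst hk'
      simp only [if_pos rfl, if_neg (Ne.symm hab), if_true]
      rw [show phat k + δ - 0 - phat k = δ by ring, abs_of_nonneg hδ0]
      ring
    · simp only [if_neg hk, if_neg hk']
      simp
  simp_rw [key]
  rw [Finset.sum_add_distrib, Finset.sum_ite_eq' univ b (fun _ => δ),
    Finset.sum_ite_eq' univ a (fun _ => δ)]
  simp

lemma pmove_mem_nbhd {d : ℕ} (phat : Fin d → ℝ) {a b : Fin d} (hab : a ≠ b) {δ ε : ℝ}
    (hδ0 : 0 ≤ δ) (hδa : δ ≤ phat a) (hδε : δ ≤ ε) (hph : phat ∈ simplex d) :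
    pmove phat a b δ ∈ nbhd phat ε :=
  ⟨pmove_simplex phat hab hδ0 hδa hph, by rw [pmove_dTV phat hab hδ0]; exact hδε⟩
/-- closed form of the value of the one-step Decoding Game. -/
theorem stmt14 {d : ℕ} (hd : 0 < d) (phat : Fin d → ℝ) (ε : ℝ)
    (hmem : phat ∈ simplex d)
    (hpos : ∀ i, 0 < phat i)
    (hsort : ∀ i j : Fin d, i ≤ j → phat j ≤ phat i)
    (heps_lo : phat ⟨d - 1, by omega⟩ ≤ ε)
    (heps_hi : ε < phat ⟨0, hd⟩)
    (ihat : Fin d)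
    (hihat1 : ε < phat ihat)
    (hihat2 : ∀ i : Fin d, ε < phat i → i ≤ ihat)
    (Ihat : Fin d)
    (hIhat_le : Ihat ≤ ihat)
    (hIhat_cond : ∑ i ∈ univ.filter (· < Ihat),
        what phat ε i * Real.log (phat i / phat Ihat) ≤ ε)
    (hIhat_max : ∀ I : Fin d, I ≤ ihat →
        (∑ i ∈ univ.filter (· < I), what phat ε i * Real.log (phat i / phat I) ≤ ε) →
        I ≤ Ihat) :
    ⨆ q ∈ simplex d, ⨅ p ∈ nbhd phat ε, obj q p
      = ((((∑ k ∈ univ.filter (· ≤ Ihat), what phat ε k * Real.log (phat k)) - ε)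
          / ∑ k ∈ univ.filter (· ≤ Ihat), what phat ε k : ℝ) : EReal) := by
  obtain ⟨hphat0, hphat1⟩ := hmem
  have hε0 : 0 < ε := lt_of_lt_of_le (hpos _) heps_lo
  set L : Fin d → ℝ := fun i => Real.log (phat i / (phat i - ε)) with hLdef
  have hub : ∀ i : Fin d, i ≤ ihat → ε < phat i :=
    fun i hi => lt_of_lt_of_le hihat1 (hsort i ihat hi)
  have hLpos : ∀ i : Fin d, i ≤ ihat → 0 < L i := by
    intro i hi
    have h1 := hub i hi
    exact Real.log_pos ((one_lt_div (by linarith)).2 (by linarith))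
  have hwdef : ∀ i, what phat ε i = ε / L i := fun i => rfl
  have hwpos : ∀ i : Fin d, i ≤ ihat → 0 < what phat ε i := by
    intro i hi; rw [hwdef]; exact div_pos hε0 (hLpos i hi)
  have hwL : ∀ i : Fin d, i ≤ ihat → what phat ε i * L i = ε := by
    intro i hi; rw [hwdef]; exact div_mul_cancel₀ ε (ne_of_gt (hLpos i hi))
  set S : Finset (Fin d) := univ.filter (· ≤ Ihat) with hSdef
  have hSmem : ∀ i : Fin d, i ∈ S ↔ i ≤ Ihat := by intro i; simp [hSdef]
  have hIhatS : Ihat ∈ S := (hSmem Ihat).2 le_rfl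
  set W : ℝ := ∑ k ∈ S, what phat ε k with hWdef
  set A : ℝ := ∑ k ∈ S, what phat ε k * Real.log (phat k) with hAdef
  have hW0 : 0 < W :=
    Finset.sum_pos (fun i hi => hwpos i (le_trans ((hSmem i).1 hi) hIhat_le)) ⟨Ihat, hIhatS⟩
  set Vs : ℝ := (A - ε) / W with hVsdef
  -- rewriting sums over S with log of quotients
  have hsum_div : ∀ c : Fin d, ∀ t : Finset (Fin d),
      ∑ i ∈ t, what phat ε i * Real.log (phat i / phat c)
        = ∑ i ∈ t, what phat ε i * (Real.log (phat i) - Real.log (phat c)) :=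
    fun c t => Finset.sum_congr rfl fun i _ => by
      rw [Real.log_div (ne_of_gt (hpos i)) (ne_of_gt (hpos c))]
  have hAWc : ∀ c : Fin d,
      ∑ i ∈ S, what phat ε i * (Real.log (phat i) - Real.log (phat c))
        = A - W * Real.log (phat c) := by
    intro c
    rw [hAdef, hWdef, Finset.sum_mul, ← Finset.sum_sub_distrib]
    exact Finset.sum_congr rfl fun i _ => by ring
  have hsplitS : S = insert Ihat (univ.filter (· < Ihat)) := by
    ext i
    simp only [hSdef, mem_filter, mem_univ, true_and, mem_insert]
    constructor
    · intro h
      rcases eq_or_lt_of_le h with h | h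
      · exact Or.inl h
      · exact Or.inr h
    · rintro (rfl | h)
      · exact le_rfl
      · exact le_of_lt h
  have hIhatnot : Ihat ∉ univ.filter (· < Ihat) := by simp
  have hcond' : A - W * Real.log (phat Ihat) ≤ ε := by
    rw [← hAWc Ihat, hsplitS, Finset.sum_insert hIhatnot]
    simp only [sub_self, mul_zero, zero_add]
    rw [← hsum_div]
    exact hIhat_cond
  have key1 : ∀ i ∈ S, Vs ≤ Real.log (phat i) := by
    intro i hi
    have h1 : Vs ≤ Real.log (phat Ihat) := by
      rw [hVsdef, div_le_iff₀ hW0]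
      nlinarith [hcond']
    exact h1.trans (Real.log_le_log (hpos Ihat) (hsort i Ihat ((hSmem i).1 hi)))
  have key2 : ∀ j : Fin d, Ihat < j → j ≤ ihat → Real.log (phat j) ≤ Vs := by
    intro j hj hji
    have hjv : (Ihat : ℕ) < (j : ℕ) := hj
    have hjiv : (j : ℕ) ≤ (ihat : ℕ) := hji
    have hI'lt : (Ihat : ℕ) + 1 < d := by have := ihat.isLt; omega
    set I' : Fin d := ⟨(Ihat : ℕ) + 1, hI'lt⟩ with hI'def
    have hI'le : I' ≤ ihat := by
      simp only [Fin.le_def, hI'def]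
      omega
    have hfilter : univ.filter (· < I') = S := by
      ext i
      simp only [hSdef, mem_filter, mem_univ, true_and, Fin.lt_def, Fin.le_def, hI'def]
      omega
    have hnotle : ¬ I' ≤ Ihat := by
      simp [Fin.le_def, hI'def]
    have hc : ε < ∑ i ∈ univ.filter (· < I'),
        what phat ε i * Real.log (phat i / phat I') :=
      not_le.1 fun hc => hnotle (hIhat_max I' hI'le hc)
    rw [hfilter, hsum_div, hAWc] at hc
    have hlogI' : Real.log (phat I') ≤ Vs := by
      rw [hVsdef, le_div_iff₀ hW0]
      nlinarith [hc]
    have hjI' : I' ≤ j := by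
      simp only [Fin.le_def, hI'def]
      omega
    exact (Real.log_le_log (hpos j) (hsort I' j hjI')).trans hlogI'
  refine le_antisymm ?_ ?_
  · -- upper bound
    refine iSup₂_le fun q hq => ?_
    by_cases hzero : ∃ j, phat j ≤ ε ∧ 0 < q j
    · obtain ⟨j, hjε, hqj⟩ := hzero
      have hd2 : 1 < d := by
        by_contra h
        have hiv := ihat.isLt
        have : ihat = ⟨d - 1, by omega⟩ := Fin.ext (by simp; omega)
        rw [this] at hihat1
        linarith
      set j' : Fin d := if j = ⟨0, hd⟩ then ⟨1, hd2⟩ else ⟨0, hd⟩ with hj'def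
      have hjj' : j ≠ j' := by
        rw [hj'def]
        split_ifs with h
        · rw [h]
          intro hc
          exact absurd (Fin.mk.inj_iff.1 hc) (by omega)
        · exact h
      refine iInf₂_le_of_le (pmove phat j j' (phat j))
        (pmove_mem_nbhd phat hjj' (hpos j).le le_rfl hjε ⟨hphat0, hphat1⟩) ?_
      have hpj : pmove phat j j' (phat j) j = 0 := by
        unfold pmove
        rw [if_neg hjj', if_pos rfl]
        ring
      have hbot : obj q (pmove phat j j' (phat j)) = ⊥ := by
        rw [obj, ← Finset.add_sum_erase univ _ (mem_univ j), hpj,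
          show elog 0 = ⊥ by rw [elog]; exact if_pos le_rfl,
          EReal.coe_mul_bot_of_pos hqj, EReal.bot_add]
      rw [hbot]
      exact bot_le
    · push_neg at hzero
      have hsupp : ∀ k, phat k ≤ ε → q k = 0 :=
        fun k hk => le_antisymm (hzero k hk) (hq.1 k)
      obtain ⟨i₀, hi₀S, hi₀max⟩ :=
        Finset.exists_max_image S (fun i => q i * L i) ⟨Ihat, hIhatS⟩
      have hi₀Ihat : i₀ ≤ Ihat := (hSmem i₀).1 hi₀S
      have hi₀ihat : i₀ ≤ ihat := hi₀Ihat.trans hIhat_le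
      have hεi₀ : ε < phat i₀ := hub i₀ hi₀ihat
      set ℓ : Fin d := ⟨d - 1, by omega⟩ with hℓdef
      have hℓε : phat ℓ ≤ ε := heps_lo
      have hqℓ : q ℓ = 0 := hsupp ℓ hℓε
      have hi₀ℓ : i₀ ≠ ℓ := by
        intro h
        rw [h] at hεi₀
        linarith
      set p1 : Fin d → ℝ := pmove phat i₀ ℓ ε with hp1def
      have hp1mem : p1 ∈ nbhd phat ε :=
        pmove_mem_nbhd phat hi₀ℓ hε0.le hεi₀.le le_rfl ⟨hphat0, hphat1⟩
      refine iInf₂_le_of_le p1 hp1mem ?_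
      have hp1pos : ∀ k, 0 < p1 k := by
        intro k
        rw [hp1def]
        unfold pmove
        by_cases hk : k = i₀
        · subst hk
          rw [if_neg hi₀ℓ, if_pos rfl]
          linarith
        · rw [if_neg hk]
          by_cases hk' : k = ℓ
          · rw [if_pos hk']
            linarith [hpos k]
          · rw [if_neg hk']
            linarith [hpos k]
      rw [obj_pos_eq q p1 hp1pos, EReal.coe_le_coe_iff]
      have hstep1 : ∑ k, q k * Real.log (p1 k)
          = (∑ k, q k * Real.log (phat k)) - q i₀ * L i₀ := by
        have hterm : ∀ k : Fin d, q k * Real.log (p1 k)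
            = q k * Real.log (phat k) + (if k = i₀ then -(q i₀ * L i₀) else 0) := by
          intro k
          by_cases hk : k = i₀
          · subst hk
            have hp1k : p1 k = phat k - ε := by
              rw [hp1def]
              unfold pmove
              rw [if_neg hi₀ℓ, if_pos rfl]
              ring
            have hLk : L k = Real.log (phat k) - Real.log (phat k - ε) := by
              rw [hLdef]
              exact Real.log_div (ne_of_gt (hpos k)) (by intro h; rw [sub_eq_zero] at h; linarith)
            rw [hp1k, if_pos rfl, hLk]
            ring
          · by_cases hk' : k = ℓ
            · subst hk'
              rw [hqℓ, if_neg hk]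
              ring
            · have hp1k : p1 k = phat k := by
                rw [hp1def]
                unfold pmove
                rw [if_neg hk, if_neg hk']
                ring
              rw [hp1k, if_neg hk]
              ring
        simp_rw [hterm]
        rw [Finset.sum_add_distrib, Finset.sum_ite_eq' univ i₀ (fun _ => -(q i₀ * L i₀))]
        simp only [mem_univ, if_true]
        ring
      set lam : Fin d → ℝ := fun i => what phat ε i * (Real.log (phat i) - Vs) / ε with hlamdef
      have hlam0 : ∀ i ∈ S, 0 ≤ lam i := by
        intro i hi
        have h1 := key1 i hi
        have h2 := (hwpos i (((hSmem i).1 hi).trans hIhat_le)).le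
        rw [hlamdef]
        exact div_nonneg (mul_nonneg h2 (by linarith)) hε0.le
      have hlamL : ∀ i ∈ S, lam i * L i = Real.log (phat i) - Vs := by
        intro i hi
        have h := hwL i (((hSmem i).1 hi).trans hIhat_le)
        rw [hlamdef]
        dsimp only
        calc what phat ε i * (Real.log (phat i) - Vs) / ε * L i
            = what phat ε i * L i * (Real.log (phat i) - Vs) / ε := by ring
          _ = ε * (Real.log (phat i) - Vs) / ε := by rw [h]
          _ = Real.log (phat i) - Vs := by field_simp
      have hWVs : W * Vs = A - ε := by
        rw [hVsdef]
        field_simp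
      have hlamsum : ∑ i ∈ S, lam i = 1 := by
        have he : ∀ i, lam i = (what phat ε i * Real.log (phat i) - what phat ε i * Vs) / ε :=
          fun i => by rw [hlamdef]; ring
        simp_rw [he]
        rw [← Finset.sum_div, Finset.sum_sub_distrib, ← Finset.sum_mul, ← hAdef, ← hWdef,
          hWVs]
        field_simp
        ring
      have hmax : ∑ i ∈ S, lam i * (q i * L i) ≤ q i₀ * L i₀ := by
        calc ∑ i ∈ S, lam i * (q i * L i) ≤ ∑ i ∈ S, lam i * (q i₀ * L i₀) :=
            Finset.sum_le_sum fun i hi => mul_le_mul_of_nonneg_left (hi₀max i hi) (hlam0 i hi)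
          _ = q i₀ * L i₀ := by rw [← Finset.sum_mul, hlamsum, one_mul]
      have hlamqL : ∑ i ∈ S, lam i * (q i * L i) = ∑ i ∈ S, q i * (Real.log (phat i) - Vs) := by
        refine Finset.sum_congr rfl fun i hi => ?_
        rw [show lam i * (q i * L i) = q i * (lam i * L i) by ring, hlamL i hi]
      have hsplit : ∑ k, q k * Real.log (phat k)
          = ∑ k ∈ S, q k * Real.log (phat k)
            + ∑ k ∈ univ.filter (fun k => ¬ k ≤ Ihat), q k * Real.log (phat k) := by
        rw [hSdef, Finset.sum_filter_add_sum_filter_not]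
      have hsumout : ∑ k ∈ univ.filter (fun k => ¬ k ≤ Ihat), q k * Real.log (phat k)
          ≤ (∑ k ∈ univ.filter (fun k => ¬ k ≤ Ihat), q k) * Vs := by
        rw [Finset.sum_mul]
        refine Finset.sum_le_sum fun k hk => ?_
        simp only [mem_filter, mem_univ, true_and] at hk
        by_cases hqk : q k = 0
        · rw [hqk]
          simp
        · have hqk' : 0 < q k := lt_of_le_of_ne (hq.1 k) (Ne.symm hqk)
          have hεk : ε < phat k := by
            by_contra h
            exact hqk (hsupp k (not_lt.1 h))
          exact mul_le_mul_of_nonneg_left (key2 k (not_le.1 hk) (hihat2 k hεk)) hqk'.le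
      have hqsum : ∑ k ∈ S, q k + ∑ k ∈ univ.filter (fun k => ¬ k ≤ Ihat), q k = 1 := by
        rw [hSdef, Finset.sum_filter_add_sum_filter_not]
        exact hq.2
      have hin : ∑ k ∈ S, q k * Real.log (phat k) - ∑ i ∈ S, q i * (Real.log (phat i) - Vs)
          = (∑ k ∈ S, q k) * Vs := by
        rw [← Finset.sum_sub_distrib, Finset.sum_mul]
        exact Finset.sum_congr rfl fun i _ => by ring
      have hVs1 : (∑ k ∈ S, q k) * Vs + (∑ k ∈ univ.filter (fun k => ¬ k ≤ Ihat), q k) * Vs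
          = Vs := by
        rw [← add_mul, hqsum, one_mul]
      rw [hstep1]
      linarith [hmax, hlamqL, hsplit, hsumout, hin, hVs1]
  · -- lower bound
    set qs : Fin d → ℝ := fun i => if i ≤ Ihat then what phat ε i / W else 0 with hqsdef
    have hqsS : ∀ i ∈ S, qs i = what phat ε i / W := by
      intro i hi
      rw [hqsdef]
      dsimp only
      rw [if_pos ((hSmem i).1 hi)]
    have hqs_mem : qs ∈ simplex d := by
      constructor
      · intro i
        rw [hqsdef]
        dsimp only
        split_ifs with h
        · exact div_nonneg (hwpos i (h.trans hIhat_le)).le hW0.le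
        · exact le_rfl
      · calc ∑ i, qs i = ∑ i ∈ S, what phat ε i / W := by
              rw [hqsdef, hSdef]
              exact (Finset.sum_filter _ _).symm
          _ = W / W := by rw [← Finset.sum_div, ← hWdef]
          _ = 1 := div_self (ne_of_gt hW0)
    refine le_iSup₂_of_le qs hqs_mem (le_iInf₂ fun p hp => ?_)
    obtain ⟨⟨hp0, hp1⟩, hptv⟩ := hp
    set δf : Fin d → ℝ := fun i => max (phat i - p i) 0 with hδdef
    have hδsum : ∑ i, δf i ≤ ε := sum_pospart_le p phat hp1 hphat1 hptv
    have hδ0 : ∀ i, 0 ≤ δf i := fun i => le_max_right _ _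
    have hδle : ∀ i, δf i ≤ ε :=
      fun i => le_trans (Finset.single_le_sum (fun j _ => hδ0 j) (mem_univ i)) hδsum
    have hple : ∀ i, phat i - δf i ≤ p i := by
      intro i
      rw [hδdef]
      dsimp only
      rcases le_total (phat i - p i) 0 with h | h
      · rw [max_eq_right h]
        linarith
      · rw [max_eq_left h]
        linarith
    have hSpos : ∀ i ∈ S, 0 < phat i - δf i := by
      intro i hi
      have h1 := hub i (((hSmem i).1 hi).trans hIhat_le)
      have h2 := hδle i
      linarith
    have hppos : ∀ i ∈ S, 0 < p i := fun i hi => lt_of_lt_of_le (hSpos i hi) (hple i)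
    have hobj : obj qs p = ((∑ i ∈ S, qs i * Real.log (p i) : ℝ) : EReal) := by
      rw [obj, ← Finset.sum_filter_add_sum_filter_not univ (· ≤ Ihat), ← hSdef]
      have h2 : ∑ i ∈ univ.filter (fun i => ¬ i ≤ Ihat), ((qs i : ℝ) : EReal) * elog (p i)
          = 0 := by
        refine Finset.sum_eq_zero fun i hi => ?_
        simp only [mem_filter, mem_univ, true_and] at hi
        rw [hqsdef]
        dsimp only
        rw [if_neg hi, EReal.coe_zero, zero_mul]
      rw [h2, add_zero, ecoe_sum]
      refine Finset.sum_congr rfl fun i hi => ?_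
      rw [elog, if_neg (not_le.2 (hppos i hi)), ← EReal.coe_mul]
    rw [hobj, EReal.coe_le_coe_iff]
    have hterm : ∀ i ∈ S,
        (what phat ε i * Real.log (phat i) - δf i) / W ≤ qs i * Real.log (p i) := by
      intro i hi
      have hiih : i ≤ ihat := ((hSmem i).1 hi).trans hIhat_le
      have hεi : ε < phat i := hub i hiih
      have hlog : Real.log (phat i) - δf i / ε * L i ≤ Real.log (p i) :=
        (chord_log (hδ0 i) (hδle i) hε0 hεi).trans
          (Real.log_le_log (hSpos i hi) (hple i))
      have h1 : what phat ε i * (Real.log (phat i) - δf i / ε * L i)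
          ≤ what phat ε i * Real.log (p i) :=
        mul_le_mul_of_nonneg_left hlog (hwpos i hiih).le
      have h2 : what phat ε i * (δf i / ε * L i) = δf i := by
        rw [show what phat ε i * (δf i / ε * L i) = δf i * (what phat ε i * L i) / ε by ring,
          hwL i hiih, mul_div_assoc, div_self (ne_of_gt hε0), mul_one]
      have h3 : what phat ε i * (Real.log (phat i) - δf i / ε * L i)
          = what phat ε i * Real.log (phat i) - δf i := by
        rw [mul_sub, h2]
      rw [hqsS i hi, div_mul_eq_mul_div]
      exact (div_le_div_iff_of_pos_right hW0).2 (by linarith)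
    calc Vs = (A - ε) / W := hVsdef
      _ ≤ (A - ∑ i ∈ S, δf i) / W := by
          have hs : ∑ i ∈ S, δf i ≤ ε :=
            le_trans (Finset.sum_le_sum_of_subset_of_nonneg (Finset.subset_univ S)
              (fun j _ _ => hδ0 j)) hδsum
          exact (div_le_div_iff_of_pos_right hW0).2 (by linarith)
      _ = ∑ i ∈ S, (what phat ε i * Real.log (phat i) - δf i) / W := by
          rw [← Finset.sum_div, Finset.sum_sub_distrib, ← hAdef]
      _ ≤ ∑ i ∈ S, qs i * Real.log (p i) := Finset.sum_le_sum hterm
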